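/- Let k be a commutative ring, V a free k-module with basis (b i)_{i ∈ Fin n}, and Q : V → k a quadratic form. In the k-algebra A := MvPolynomial (Fin n) k ⊗[k] CliffordAlgebra Q (the tensor product of k-algebras, in which the two factors commute), set δ := Σ_{i ∈ Fin n} (X i) ⊗ ι(b i). Then δ·δ = (Σ_{i ∈ Fin n} Q(b i)·(X i)² + Σ_{i < j} polar Q (b i) (b j)·(X i · X j)) ⊗ 1, i.e. δ squares to the element of MvPolynomial (Fin n) k ⊗ 1 given by the polynomial representing Q in the basis b. -/

import Mathlib

open CliffordAlgebra
open scoped TensorProduct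

private lemma pair_sum {M : Type*} [AddCommMonoid M] (n : ℕ) (F : Fin n → Fin n → M) :
    ∑ i : Fin n, ∑ j : Fin n, F i j =
      ∑ i : Fin n, F i i
        + ∑ i : Fin n, ∑ j ∈ Finset.univ.filter (fun j : Fin n => i < j), (F i j + F j i) := by
  have h : ∀ i j : Fin n, F i j =
      (if j = i then F i i else 0) + (if i < j then F i j else 0)
        + (if j < i then F i j else 0) := by
    intro i j
    rcases lt_trichotomy i j with h | h | h
    · simp [h, h.ne', (not_lt.2 h.le : ¬ j < i)]
    · simp [h]
    · simp [h, h.ne, (not_lt.2 h.le : ¬ i < j)]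
  calc ∑ i : Fin n, ∑ j : Fin n, F i j
      = ∑ i : Fin n, ∑ j : Fin n,
          ((if j = i then F i i else 0) + (if i < j then F i j else 0)
            + (if j < i then F i j else 0)) := by
        exact Finset.sum_congr rfl fun i _ => Finset.sum_congr rfl fun j _ => h i j
    _ = (∑ i : Fin n, ∑ j : Fin n, if j = i then F i i else 0)
        + (∑ i : Fin n, ∑ j : Fin n, if i < j then F i j else 0)
        + (∑ i : Fin n, ∑ j : Fin n, if j < i then F i j else 0) := by
        simp [Finset.sum_add_distrib]
    _ = (∑ i : Fin n, F i i)
        + ((∑ i : Fin n, ∑ j : Fin n, if i < j then F i j else 0)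
          + (∑ i : Fin n, ∑ j : Fin n, if i < j then F j i else 0)) := by
        rw [Finset.sum_comm (f := fun i j => if j < i then F i j else 0)]
        simp [Finset.sum_ite_eq, add_assoc]
    _ = (∑ i : Fin n, F i i)
        + ∑ i : Fin n, ∑ j : Fin n, if i < j then F i j + F j i else 0 := by
        rw [← Finset.sum_add_distrib]
        simp [← Finset.sum_add_distrib, ite_add_ite]
    _ = _ := by
        simp [Finset.sum_filter]

/-- In the tensor product of the polynomial algebra and the Clifford algebra, the element
`δ = ∑ i, X i ⊗ ι (b i)` squares to the polynomial representing `Q` in the basis `b`,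
tensored with `1`. -/
theorem clifford_delta_sq
    (k : Type*) [CommRing k]
    (V : Type*) [AddCommGroup V] [Module k V]
    (n : ℕ) (b : Module.Basis (Fin n) k V) (Q : QuadraticForm k V)
    (δ : MvPolynomial (Fin n) k ⊗[k] CliffordAlgebra Q)
    (hδ : δ = ∑ i : Fin n, MvPolynomial.X i ⊗ₜ[k] ι Q (b i)) :
    δ * δ =
      (∑ i : Fin n, Q (b i) • (MvPolynomial.X i ^ 2)
        + ∑ i : Fin n, ∑ j ∈ Finset.univ.filter (fun j : Fin n => i < j),
            QuadraticMap.polar Q (b i) (b j) • (MvPolynomial.X i * MvPolynomial.X j))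
        ⊗ₜ[k] (1 : CliffordAlgebra Q) := by
  subst hδ
  rw [Finset.sum_mul_sum]
  simp only [Algebra.TensorProduct.tmul_mul_tmul]
  rw [pair_sum, TensorProduct.add_tmul, TensorProduct.sum_tmul]
  congr 1
  · refine Finset.sum_congr rfl fun i _ => ?_
    rw [ι_sq_scalar, Algebra.algebraMap_eq_smul_one, TensorProduct.tmul_smul,
      TensorProduct.smul_tmul', sq]
  · rw [TensorProduct.sum_tmul]
    refine Finset.sum_congr rfl fun i _ => ?_
    rw [TensorProduct.sum_tmul]
    refine Finset.sum_congr rfl fun j _ => ?_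
    rw [mul_comm (MvPolynomial.X j) (MvPolynomial.X i), ← TensorProduct.tmul_add,
      ι_mul_ι_add_swap, Algebra.algebraMap_eq_smul_one, TensorProduct.tmul_smul,
      TensorProduct.smul_tmul']
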